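/- Let n1, n2, n3 be positive integers, let σ1 ∈ M_{n1·n2}(ℂ) and σ2 ∈ M_{n2·n3}(ℂ) be Hermitian. Then there exists a Hermitian ρ ∈ M_{n1·n2·n3}(ℂ) with tr_1(ρ) = σ2 and tr_3(ρ) = σ1 if and only if the system-2 marginals of σ1 and σ2 agree, i.e., the partial trace of σ1 over its first factor equals the partial trace of σ2 over its second factor: tr_1(σ1) = tr_3'(σ2) as elements of M_{n2}(ℂ), where tr_1(σ1) = Σ_{j=1}^{n1} (σ1)_{jj} for σ1 viewed as an n1×n1 block matrix with n2×n2 blocks, and tr_3'(σ2) is obtained by applying the trace entrywise to the n3×n3 blocks of σ2 viewed as an n2×n2 block matrix. -/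

import Mathlib

open Matrix Finset

/-- Partial trace of a tripartite matrix over the first subsystem. -/
noncomputable def ptr1 {n1 n2 n3 : ℕ}
    (ρ : Matrix (Fin n1 × Fin n2 × Fin n3) (Fin n1 × Fin n2 × Fin n3) ℂ) :
    Matrix (Fin n2 × Fin n3) (Fin n2 × Fin n3) ℂ :=
  Matrix.of fun p q => ∑ k : Fin n1, ρ (k, p) (k, q)

/-- Partial trace of a tripartite matrix over the third subsystem. -/
noncomputable def ptr3 {n1 n2 n3 : ℕ}
    (ρ : Matrix (Fin n1 × Fin n2 × Fin n3) (Fin n1 × Fin n2 × Fin n3) ℂ) :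
    Matrix (Fin n1 × Fin n2) (Fin n1 × Fin n2) ℂ :=
  Matrix.of fun p q => ∑ t : Fin n3, ρ (p.1, p.2, t) (q.1, q.2, t)

/-- Partial trace of a bipartite matrix over its first factor. -/
noncomputable def btr1 {m n : ℕ} (σ : Matrix (Fin m × Fin n) (Fin m × Fin n) ℂ) :
    Matrix (Fin n) (Fin n) ℂ :=
  Matrix.of fun i j => ∑ k : Fin m, σ (k, i) (k, j)

/-- Partial trace of a bipartite matrix over its second factor. -/
noncomputable def btr2 {m n : ℕ} (σ : Matrix (Fin m × Fin n) (Fin m × Fin n) ℂ) :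
    Matrix (Fin m) (Fin m) ℂ :=
  Matrix.of fun i j => ∑ t : Fin n, σ (i, t) (j, t)

/-- A Hermitian tripartite extension `ρ` with `tr_1(ρ) = σ2` and `tr_3(ρ) = σ1` exists
if and only if the marginals of `σ1` and `σ2` on the middle system agree. -/
theorem stmt14 {n1 n2 n3 : ℕ} (hn1 : 0 < n1) (hn2 : 0 < n2) (hn3 : 0 < n3)
    (σ1 : Matrix (Fin n1 × Fin n2) (Fin n1 × Fin n2) ℂ) (hσ1 : σ1.IsHermitian)
    (σ2 : Matrix (Fin n2 × Fin n3) (Fin n2 × Fin n3) ℂ) (hσ2 : σ2.IsHermitian) :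
    (∃ ρ : Matrix (Fin n1 × Fin n2 × Fin n3) (Fin n1 × Fin n2 × Fin n3) ℂ,
        ρ.IsHermitian ∧ ptr1 ρ = σ2 ∧ ptr3 ρ = σ1) ↔
      btr1 σ1 = btr2 σ2 := by
  constructor
  · rintro ⟨ρ, hρ, h1, h3⟩
    subst h1 h3
    ext i j
    simp only [btr1, btr2, ptr1, ptr3, Matrix.of_apply]
    exact Finset.sum_comm
  · intro h
    have hn3' : (n3 : ℂ) ≠ 0 := Nat.cast_ne_zero.mpr hn3.ne'
    have hn1' : (n1 : ℂ) ≠ 0 := Nat.cast_ne_zero.mpr hn1.ne'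
    set τ := btr1 σ1 with hτdef
    have hτ : τ.IsHermitian := by
      ext i j
      simp only [Matrix.conjTranspose_apply, hτdef, btr1, Matrix.of_apply, star_sum]
      exact Finset.sum_congr rfl fun k _ => hσ1.apply (k, i) (k, j)
    have estar : ∀ (P : Prop) [Decidable P], star (if P then (1:ℂ) else 0) = if P then 1 else 0 := by
      intro P _; split <;> simp
    refine ⟨Matrix.of fun p q =>
      σ1 (p.1, p.2.1) (q.1, q.2.1) * (if p.2.2 = q.2.2 then 1 else 0) / n3
      + (if p.1 = q.1 then 1 else 0) / n1 * σ2 (p.2.1, p.2.2) (q.2.1, q.2.2)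
      - (if p.1 = q.1 then 1 else 0) / n1 * τ p.2.1 q.2.1 * (if p.2.2 = q.2.2 then 1 else 0) / n3,
      ?_, ?_, ?_⟩
    · ext p q
      simp only [Matrix.conjTranspose_apply, Matrix.of_apply, star_sub, star_add, star_div₀,
        star_mul', star_natCast, estar]
      rw [hσ1.apply, hσ2.apply, hτ.apply]
      simp only [eq_comm]
    · ext p q
      obtain ⟨b, c⟩ := p
      obtain ⟨b', c'⟩ := q
      have hb : (∑ i : Fin n1, σ1 (i, b) (i, b')) = τ b b' := rfl
      simp only [ptr1, Matrix.of_apply]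
      rw [Finset.sum_sub_distrib, Finset.sum_add_distrib]
      by_cases hc : c = c'
      · subst hc
        simp only [eq_self_iff_true, if_true, mul_one, Finset.sum_const, Finset.card_univ,
          Fintype.card_fin, nsmul_eq_mul, ← Finset.sum_div, hb]
        field_simp
        ring
      · simp only [eq_self_iff_true, if_true, hc, if_false, mul_zero, zero_div,
          Finset.sum_const_zero, Finset.sum_const, Finset.card_univ, Fintype.card_fin,
          nsmul_eq_mul]
        field_simp
        ring
    · ext p q
      obtain ⟨a, b⟩ := p
      obtain ⟨a', b'⟩ := q
      have hb : (∑ t : Fin n3, σ2 (b, t) (b', t)) = τ b b' :=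
        (congrFun (congrFun h b) b').symm
      simp only [ptr3, Matrix.of_apply]
      rw [Finset.sum_sub_distrib, Finset.sum_add_distrib]
      by_cases ha : a = a'
      · subst ha
        simp only [eq_self_iff_true, if_true, mul_one, one_div, ← Finset.mul_sum, hb,
          Finset.sum_const, Finset.card_univ, Fintype.card_fin, nsmul_eq_mul]
        field_simp
        ring
      · simp only [eq_self_iff_true, if_true, ha, if_false, mul_one, zero_div, zero_mul,
          mul_zero, Finset.sum_const_zero, Finset.sum_const, Finset.card_univ,
          Fintype.card_fin, nsmul_eq_mul]
        field_simp
        ring
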